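/- Let A : ℝ^n → ℝ^n be continuous, B : ℝ^n ⇉ ℝ^n maximal monotone, β > 0, δ ∈ (0,1), θ ∈ (0,1), and x a point with J := (I + βB)^{-1}(x − βA(x)) ≠ x. Suppose that for every j ≥ 0 there exists u_j ∈ B(θ^j J + (1−θ^j)x) with ‖u_j‖ ≤ R such that ⟨A(θ^j J + (1−θ^j)x) + u_j, x − J⟩ < (δ/β)‖x − J‖², and the u_j have a cluster point. Then x = J, a contradiction; i.e., the Armijo-type line search terminates in finitely many steps: there exist j ≥ 0 and u ∈ B(θ^j J + (1−θ^j)x) ∩ B[0,R] with ⟨A(θ^j J + (1−θ^j)x) + u, x − J⟩ ≥ (δ/β)‖x − J‖². -/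

import Mathlib

open RealInnerProductSpace

/-- `B` is a monotone set-valued operator. -/
def MonotoneOp {n : ℕ} (B : EuclideanSpace ℝ (Fin n) → Set (EuclideanSpace ℝ (Fin n))) : Prop :=
  ∀ x y u v, u ∈ B x → v ∈ B y → 0 ≤ ⟪x - y, u - v⟫

/-- `B` is a maximal monotone set-valued operator. -/
def MaximalMonotoneOp {n : ℕ}
    (B : EuclideanSpace ℝ (Fin n) → Set (EuclideanSpace ℝ (Fin n))) : Prop :=
  MonotoneOp B ∧ ∀ x u, (∀ y v, v ∈ B y → 0 ≤ ⟪x - y, u - v⟫) → u ∈ B x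

/-- The Armijo-type line search terminates in finitely many steps: if `J ≠ x` is the
forward-backward point (so `x − βA(x) = J + βv` for some `v ∈ B(J)`), then there exist
`j ≥ 0` and `u ∈ B(θʲJ + (1−θʲ)x) ∩ B[0,R]` with
`⟨A(θʲJ + (1−θʲ)x) + u, x − J⟩ ≥ (δ/β)‖x − J‖²`. -/
theorem lineSearch_terminates {n : ℕ}
    (A : EuclideanSpace ℝ (Fin n) → EuclideanSpace ℝ (Fin n)) (hA : Continuous A)
    (B : EuclideanSpace ℝ (Fin n) → Set (EuclideanSpace ℝ (Fin n)))
    (hB : MaximalMonotoneOp B)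
    (β δ θ R : ℝ) (hβ : 0 < β) (hδ : δ ∈ Set.Ioo (0 : ℝ) 1) (hθ : θ ∈ Set.Ioo (0 : ℝ) 1)
    (hR : 0 < R)
    (x J : EuclideanSpace ℝ (Fin n)) (hJx : J ≠ x)
    (hres : ∃ v ∈ B J, x - β • A x = J + β • v)
    (hnonempty : ∀ j : ℕ,
      (B (θ ^ j • J + (1 - θ ^ j) • x) ∩ Metric.closedBall 0 R).Nonempty) :
    ∃ j : ℕ, ∃ u ∈ B (θ ^ j • J + (1 - θ ^ j) • x) ∩ Metric.closedBall 0 R,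
      (δ / β) * ‖x - J‖ ^ 2 ≤ ⟪A (θ ^ j • J + (1 - θ ^ j) • x) + u, x - J⟫ := by
  by_contra hcon
  push_neg at hcon
  set y : ℕ → EuclideanSpace ℝ (Fin n) := fun j => θ ^ j • J + (1 - θ ^ j) • x with hy
  choose u huB huR using hnonempty
  -- convergence of y to x
  have hθ0 : Filter.Tendsto (fun j : ℕ => θ ^ j) Filter.atTop (nhds 0) :=
    tendsto_pow_atTop_nhds_zero_of_lt_one hθ.1.le hθ.2
  have hyx : Filter.Tendsto y Filter.atTop (nhds x) := by
    have h : Filter.Tendsto y Filter.atTop (nhds ((0:ℝ) • J + (1 - (0:ℝ)) • x)) :=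
      (hθ0.smul_const J).add ((tendsto_const_nhds.sub hθ0).smul_const x)
    simpa using h
  -- compactness: subsequence of u converging to some a
  obtain ⟨a, -, φ, hφ, hau⟩ :=
    (isCompact_closedBall (0 : EuclideanSpace ℝ (Fin n)) R).tendsto_subseq huR
  have hyφ : Filter.Tendsto (fun k => y (φ k)) Filter.atTop (nhds x) :=
    hyx.comp hφ.tendsto_atTop
  -- a ∈ B x by maximality
  have haB : a ∈ B x := by
    refine hB.2 x a (fun z w hw => ?_)
    have hk : ∀ k, (0:ℝ) ≤ ⟪y (φ k) - z, u (φ k) - w⟫ := fun k =>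
      hB.1 _ _ _ _ (huB (φ k)) hw
    have hlim : Filter.Tendsto (fun k => ⟪y (φ k) - z, u (φ k) - w⟫) Filter.atTop
        (nhds ⟪x - z, a - w⟫) :=
      (hyφ.sub tendsto_const_nhds).inner (hau.sub tendsto_const_nhds)
    exact le_of_tendsto_of_tendsto tendsto_const_nhds hlim
      (Filter.Eventually.of_forall hk)
  -- limit inequality
  have hle : ⟪A x + a, x - J⟫ ≤ δ / β * ‖x - J‖ ^ 2 := by
    have hlim : Filter.Tendsto (fun k => ⟪A (y (φ k)) + u (φ k), x - J⟫) Filter.atTop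
        (nhds ⟪A x + a, x - J⟫) :=
      ((hA.continuousAt.tendsto.comp hyφ).add hau).inner tendsto_const_nhds
    exact le_of_tendsto hlim (Filter.Eventually.of_forall fun k =>
      (hcon (φ k) (u (φ k)) ⟨huB (φ k), huR (φ k)⟩).le)
  -- resolvent identity
  obtain ⟨v, hvB, hv⟩ := hres
  have hβA : β • (A x + a) = (x - J) + β • (a - v) := by
    have h1 : β • A x = x - J - β • v := by
      linear_combination (norm := module) -hv
    rw [smul_add, h1, smul_sub]
    module
  -- monotonicity gives lower bound
  have hmono : (0:ℝ) ≤ ⟪x - J, a - v⟫ := hB.1 x J a v haB hvB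
  have hnorm : (0:ℝ) < ‖x - J‖ ^ 2 := by
    have h0 : x - J ≠ 0 := sub_ne_zero.mpr (Ne.symm hJx)
    have h1 : 0 < ‖x - J‖ := norm_pos_iff.mpr h0
    positivity
  have hlow : ‖x - J‖ ^ 2 ≤ β * ⟪A x + a, x - J⟫ := by
    have h1 : ⟪β • (A x + a), x - J⟫ = β * ⟪A x + a, x - J⟫ := real_inner_smul_left _ _ _
    rw [← h1, hβA, inner_add_left, real_inner_self_eq_norm_sq, real_inner_smul_left]
    nlinarith [real_inner_comm (x - J) (a - v), hmono, hβ]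
  have hup : β * ⟪A x + a, x - J⟫ ≤ δ * ‖x - J‖ ^ 2 := by
    have := mul_le_mul_of_nonneg_left hle hβ.le
    rw [mul_comm (δ / β)] at this
    calc β * ⟪A x + a, x - J⟫ ≤ β * (‖x - J‖ ^ 2 * (δ / β)) := this
      _ = δ * ‖x - J‖ ^ 2 := by field_simp
  nlinarith [hδ.2, hnorm]
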